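/- Let {f_t : t ∈ T} be a family of functions on ℝⁿ with pointwise supremum f such that f** = sup_{t∈T} f_t**, and suppose f* is epi-pointed. Then epi f* = conv( cl( ∪_{t∈T} epi f_t* ) ) + (epi f*)_∞, where (epi f*)_∞ is the asymptotic (recession) cone of epi f*. -/

import Mathlib

open scoped RealInnerProductSpace Pointwise
open Set Filter

noncomputable section

/-- `En n` is the Euclidean space `ℝⁿ`. -/
abbrev En (n : ℕ) := EuclideanSpace ℝ (Fin n)

/-- The epigraph of an extended-real-valued function. -/
def epiS {n : ℕ} (g : En n → EReal) : Set (En n × ℝ) := {p | g p.1 ≤ (p.2 : EReal)}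

/-- The Fenchel conjugate `g*`. -/
def conjF {n : ℕ} (g : En n → EReal) (y : En n) : EReal :=
  ⨆ x, (⟪y, x⟫ : EReal) - g x

/-- The effective domain of `g`. -/
def dm {n : ℕ} (g : En n → EReal) : Set (En n) := {x | g x < ⊤}

/-- `g` is proper: never `-∞` and not identically `+∞`. -/
def ProperF {n : ℕ} (g : En n → EReal) : Prop := (∃ x, g x < ⊤) ∧ ∀ x, ⊥ < g x

/-- The ε-subdifferential `∂_ε g(x)` (empty when `g x` is not finite). -/
def eSub {n : ℕ} (g : En n → EReal) (ε : ℝ) (x : En n) : Set (En n) :=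
  {y | ∃ r : ℝ, g x = (r : EReal) ∧ ∀ z, ((⟪y, z - x⟫ + r - ε : ℝ) : EReal) ≤ g z}

/-- The indicator function `δ_A` (0 on `A`, `+∞` outside). -/
def indE {n : ℕ} (A : Set (En n)) (x : En n) : EReal :=
  Set.indicator Aᶜ (fun _ => (⊤ : EReal)) x

/-- The ε-normal set `N^ε_A(x) = ∂_ε δ_A(x)`. -/
def eNormal {n : ℕ} (A : Set (En n)) (ε : ℝ) (x : En n) : Set (En n) :=
  eSub (indE A) ε x

/-- `Γ₀`: proper, lower semicontinuous, convex. -/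
def Gamma0 {n : ℕ} (g : En n → EReal) : Prop :=
  ProperF g ∧ LowerSemicontinuous g ∧ Convex ℝ (epiS g)

/-- Epi-pointed: `g*` is proper with nonempty interior of its domain. -/
def EpiPointed {n : ℕ} (g : En n → EReal) : Prop :=
  ProperF (conjF g) ∧ (interior (dm (conjF g))).Nonempty

/-- The closed convex hull `c̄o g`: the function whose epigraph is the closed
convex hull of `epi g`. -/
def cchF {n : ℕ} (g : En n → EReal) (x : En n) : EReal :=
  sInf ((fun r : ℝ => (r : EReal)) '' {r | (x, r) ∈ closure (convexHull ℝ (epiS g))})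

/-- The convex hull `co g`: the function whose epigraph is the convex hull of `epi g`. -/
def coF {n : ℕ} (g : En n → EReal) (x : En n) : EReal :=
  sInf ((fun r : ℝ => (r : EReal)) '' {r | (x, r) ∈ convexHull ℝ (epiS g)})

/-- Membership in the generalized simplex `Δ(T)`. -/
def inSimplex {T : Type*} (l : T →₀ ℝ) : Prop :=
  (∀ t, 0 ≤ l t ∧ l t ≤ 1) ∧ (∑ t ∈ l.support, l t) = 1

/-- Membership in `Δ^ε(T)`. -/
def inDelta {T : Type*} (ε : ℝ) (e : T →₀ ℝ) : Prop :=
  (∀ t, 0 ≤ e t ∧ e t ≤ ε) ∧ (∑ t ∈ e.support, e t) = ε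

end

/-- The asymptotic (recession) cone `A_∞ = ⋂_{ε>0} cl((0,ε]·A)`. -/
def asympCone {n : ℕ} (A : Set (En n × ℝ)) : Set (En n × ℝ) :=
  ⋂ ε > (0:ℝ), closure (⋃ s ∈ Set.Ioc (0:ℝ) ε, s • A)

open scoped Topology

section Helpers

variable {n : ℕ}

-- a - c ≤ b from a - b ≤ c, for a c real
lemma ereal_sub_le_of_sub_le {a c : ℝ} {b : EReal} (h : (a : EReal) - b ≤ (c : EReal)) :
    ((a - c : ℝ) : EReal) ≤ b := by
  induction b with
  | bot => rw [EReal.coe_sub_bot] at h; exact absurd h (by simp)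
  | coe b =>
      rw [← EReal.coe_sub, EReal.coe_le_coe_iff] at h
      rw [EReal.coe_le_coe_iff]; linarith
  | top => exact le_top

lemma le_conjF {n : ℕ} (h : En n → EReal) (y x : En n) :
    (⟪y, x⟫ : EReal) - h x ≤ conjF h y := le_iSup (fun x => (⟪y, x⟫ : EReal) - h x) x

lemma conjF_anti {n : ℕ} {h₁ h₂ : En n → EReal} (hle : ∀ x, h₁ x ≤ h₂ x) (y : En n) :
    conjF h₂ y ≤ conjF h₁ y :=
  iSup_mono fun x => EReal.sub_le_sub le_rfl (hle x)

lemma mem_epiS {g : En n → EReal} {p : En n × ℝ} : p ∈ epiS g ↔ g p.1 ≤ (p.2 : EReal) := Iff.rfl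

-- the halfspace {p | ⟪x,p.1⟫ - c ≤ p.2}
lemma halfspace_isClosed (x : En n) (c : ℝ) :
    IsClosed {p : En n × ℝ | ⟪x, p.1⟫ - c ≤ p.2} := by
  have hc : Continuous fun p : En n × ℝ => p.2 - (⟪x, p.1⟫ - c) := by
    apply Continuous.sub continuous_snd
    exact ((continuous_const.inner continuous_fst)).sub continuous_const
  have : {p : En n × ℝ | ⟪x, p.1⟫ - c ≤ p.2} = (fun p : En n × ℝ => p.2 - (⟪x, p.1⟫ - c)) ⁻¹' Ici 0 := by
    ext p; simp [sub_nonneg]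
  rw [this]
  exact IsClosed.preimage hc isClosed_Ici

lemma halfspace_convex (x : En n) (c : ℝ) :
    Convex ℝ {p : En n × ℝ | ⟪x, p.1⟫ - c ≤ p.2} := by
  have hlin : IsLinearMap ℝ fun p : En n × ℝ => p.2 - ⟪x, p.1⟫ := by
    constructor
    · intro p q
      simp [inner_add_right]; ring
    · intro a p
      simp [inner_smul_right, Prod.smul_snd]; ring
  have : {p : En n × ℝ | ⟪x, p.1⟫ - c ≤ p.2} = {p : En n × ℝ | -c ≤ p.2 - ⟪x, p.1⟫} := by
    ext p; constructor <;> intro h <;> simp at * <;> linarith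
  rw [this]
  exact convex_halfSpace_ge hlin (-c)

lemma epiS_conjF_eq_iInter (h : En n → EReal) :
    epiS (conjF h) = ⋂ x, {p : En n × ℝ | (⟪p.1, x⟫ : EReal) - h x ≤ (p.2 : EReal)} := by
  ext p
  simp only [mem_epiS, conjF, iSup_le_iff, mem_iInter, mem_setOf_eq]

lemma epiS_conjF_isClosed (h : En n → EReal) : IsClosed (epiS (conjF h)) := by
  rw [epiS_conjF_eq_iInter]
  apply isClosed_iInter
  intro x
  induction h x with
  | bot =>
      convert isClosed_empty
      ext p; simp [EReal.coe_sub_bot, (EReal.coe_lt_top p.2).ne']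
  | coe c =>
      convert halfspace_isClosed x c using 1
      ext p
      rw [mem_setOf_eq, mem_setOf_eq, ← EReal.coe_sub, EReal.coe_le_coe_iff,
        real_inner_comm]
  | top =>
      convert isClosed_univ
      ext p; simp [EReal.sub_top]

lemma epiS_conjF_convex (h : En n → EReal) : Convex ℝ (epiS (conjF h)) := by
  rw [epiS_conjF_eq_iInter]
  apply convex_iInter
  intro x
  induction h x with
  | bot =>
      convert convex_empty
      ext p; simp [EReal.coe_sub_bot, (EReal.coe_lt_top p.2).ne']
  | coe c =>
      convert halfspace_convex x c using 1
      ext p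
      rw [mem_setOf_eq, mem_setOf_eq, ← EReal.coe_sub, EReal.coe_le_coe_iff,
        real_inner_comm]
  | top =>
      convert convex_univ
      ext p; simp [EReal.sub_top]

end Helpers

section Cone

variable {n : ℕ} {A : Set (En n × ℝ)}

lemma mem_asympCone_iff {v : En n × ℝ} :
    v ∈ asympCone A ↔ ∀ ε > (0:ℝ), v ∈ closure (⋃ s ∈ Set.Ioc (0:ℝ) ε, s • A) := by
  simp [asympCone]

lemma zero_mem_asympCone (hne : A.Nonempty) : (0 : En n × ℝ) ∈ asympCone A := by
  obtain ⟨a, ha⟩ := hne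
  rw [mem_asympCone_iff]
  intro ε hε
  rw [Metric.mem_closure_iff]
  intro δ hδ
  have hna : (0:ℝ) < ‖a‖ + 1 := by positivity
  set s : ℝ := min ε (δ / (‖a‖ + 1)) with hs
  have hspos : 0 < s := lt_min hε (div_pos hδ hna)
  refine ⟨s • a, ?_, ?_⟩
  · exact mem_iUnion₂.2 ⟨s, ⟨hspos, min_le_left _ _⟩, Set.smul_mem_smul_set ha⟩
  · rw [dist_comm, dist_zero_right, norm_smul, Real.norm_eq_abs, abs_of_pos hspos]
    have h1 : s ≤ δ / (‖a‖ + 1) := min_le_right _ _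
    have h2 : s * ‖a‖ ≤ δ / (‖a‖ + 1) * ‖a‖ :=
      mul_le_mul_of_nonneg_right h1 (norm_nonneg a)
    have h3 : δ / (‖a‖ + 1) * ‖a‖ < δ := by
      rw [div_mul_eq_mul_div, div_lt_iff₀ hna]
      nlinarith [norm_nonneg a]
    linarith

lemma add_mem_asympCone (hconv : Convex ℝ A) {d₁ d₂ : En n × ℝ}
    (h₁ : d₁ ∈ asympCone A) (h₂ : d₂ ∈ asympCone A) : d₁ + d₂ ∈ asympCone A := by
  rw [mem_asympCone_iff] at *
  intro ε hε
  have h₁' := h₁ (ε/2) (by linarith)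
  have h₂' := h₂ (ε/2) (by linarith)
  rw [Metric.mem_closure_iff] at *
  intro δ hδ
  obtain ⟨b₁, hb₁, hd₁⟩ := h₁' (δ/2) (by linarith)
  obtain ⟨b₂, hb₂, hd₂⟩ := h₂' (δ/2) (by linarith)
  obtain ⟨s₁, hs₁, a₁, ha₁, rfl⟩ : ∃ s ∈ Set.Ioc (0:ℝ) (ε/2), ∃ a ∈ A, s • a = b₁ := by
    simpa [Set.mem_smul_set] using hb₁
  obtain ⟨s₂, hs₂, a₂, ha₂, rfl⟩ : ∃ s ∈ Set.Ioc (0:ℝ) (ε/2), ∃ a ∈ A, s • a = b₂ := by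
    simpa [Set.mem_smul_set] using hb₂
  have hspos : 0 < s₁ + s₂ := by have := hs₁.1; have := hs₂.1; linarith
  refine ⟨s₁ • a₁ + s₂ • a₂, ?_, ?_⟩
  · apply mem_iUnion₂.2
    refine ⟨s₁ + s₂, ⟨hspos, by have := hs₁.2; have := hs₂.2; linarith⟩, ?_⟩
    have hc : (s₁ / (s₁ + s₂)) • a₁ + (s₂ / (s₁ + s₂)) • a₂ ∈ A := by
      apply hconv ha₁ ha₂ (div_nonneg hs₁.1.le hspos.le) (div_nonneg hs₂.1.le hspos.le)
      field_simp
    refine ⟨_, hc, ?_⟩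
    show (s₁ + s₂) • _ = _
    rw [smul_add, smul_smul, smul_smul]
    rw [mul_div_cancel₀ _ hspos.ne', mul_div_cancel₀ _ hspos.ne']
  · calc dist (d₁ + d₂) (s₁ • a₁ + s₂ • a₂) ≤ dist d₁ (s₁ • a₁) + dist d₂ (s₂ • a₂) :=
          dist_add_add_le _ _ _ _
      _ < δ := by linarith

lemma asympCone_mem_of_tendsto {a : ℕ → En n × ℝ} {s : ℕ → ℝ} {v : En n × ℝ}
    (hA : ∀ᶠ k in atTop, a k ∈ A) (hpos : ∀ᶠ k in atTop, 0 < s k)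
    (hs0 : Tendsto s atTop (𝓝 0))
    (hv : Tendsto (fun k => s k • a k) atTop (𝓝 v)) : v ∈ asympCone A := by
  rw [mem_asympCone_iff]
  intro ε hε
  apply mem_closure_of_tendsto hv
  have hlt : ∀ᶠ k in atTop, s k < ε := hs0.eventually_lt_const hε
  filter_upwards [hA, hpos, hlt] with k hk1 hk2 hk3
  exact mem_iUnion₂.2 ⟨s k, ⟨hk2, hk3.le⟩, Set.smul_mem_smul_set hk1⟩

lemma add_asympCone_mem (hcl : IsClosed A) (hconv : Convex ℝ A) {a d : En n × ℝ}
    (ha : a ∈ A) (hd : d ∈ asympCone A) : a + d ∈ A := by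
  rw [← hcl.closure_eq]
  rw [Metric.mem_closure_iff]
  intro δ hδ
  have hna : (0:ℝ) < ‖a‖ + 1 := by positivity
  set ε : ℝ := min 1 (δ / (2 * (‖a‖ + 1))) with hεdef
  have hεpos : 0 < ε := lt_min one_pos (by positivity)
  rw [mem_asympCone_iff] at hd
  have := hd ε hεpos
  rw [Metric.mem_closure_iff] at this
  obtain ⟨b, hb, hdb⟩ := this (δ/2) (by linarith)
  obtain ⟨s, hs, c, hc, rfl⟩ : ∃ s ∈ Set.Ioc (0:ℝ) ε, ∃ x ∈ A, s • x = b := by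
    simpa [Set.mem_smul_set] using hb
  have hs1 : s ≤ 1 := hs.2.trans (min_le_left _ _)
  have hsδ : s ≤ δ / (2 * (‖a‖ + 1)) := hs.2.trans (min_le_right _ _)
  refine ⟨(1 - s) • a + s • c, hconv ha hc (by linarith) hs.1.le (by ring), ?_⟩
  have hq : (1 - s) • a + s • c = a + (s • c - s • a) := by
    rw [sub_smul, one_smul]; abel
  rw [hq, dist_add_left]
  calc dist d (s • c - s • a) ≤ dist d (s • c) + dist (s • c) (s • c - s • a) :=
        dist_triangle _ _ _
    _ = dist d (s • c) + ‖s • a‖ := by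
        congr 1
        rw [dist_eq_norm, sub_sub_cancel]
    _ < δ/2 + ‖s • a‖ := by linarith
    _ ≤ δ/2 + δ/2 := by
        have : ‖s • a‖ = s * ‖a‖ := by
          rw [norm_smul, Real.norm_eq_abs, abs_of_pos hs.1]
        rw [this]
        have h2 : s * ‖a‖ ≤ δ / (2 * (‖a‖ + 1)) * ‖a‖ :=
          mul_le_mul_of_nonneg_right hsδ (norm_nonneg a)
        have h3 : δ / (2 * (‖a‖ + 1)) * ‖a‖ ≤ δ/2 := by
          rw [div_mul_eq_mul_div, div_le_iff₀ (by positivity)]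
          nlinarith [norm_nonneg a]
        linarith
    _ = δ := by ring

lemma sum_mem_asympCone (hconv : Convex ℝ A) (hne : A.Nonempty) {ι : Type*} (t : Finset ι)
    (v : ι → En n × ℝ) (hv : ∀ i ∈ t, v i ∈ asympCone A) : ∑ i ∈ t, v i ∈ asympCone A :=
  Finset.sum_induction v (· ∈ asympCone A) (fun _ _ => add_mem_asympCone hconv)
    (zero_mem_asympCone hne) hv

end Cone

section Separation

variable {n : ℕ} {T : Type*}

lemma ereal_cases (x : EReal) : x = ⊥ ∨ (∃ c : ℝ, x = (c : EReal)) ∨ x = ⊤ := by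
  induction x with
  | bot => exact Or.inl rfl
  | coe c => exact Or.inr (Or.inl ⟨c, rfl⟩)
  | top => exact Or.inr (Or.inr rfl)

/-- From `h y ≠ ⊤`, the epigraph at `y` is nonempty. -/
lemma exists_mem_epiS {h : En n → EReal} {y : En n} (hy : h y ≠ ⊤) :
    ∃ r : ℝ, (y, r) ∈ epiS h := by
  rcases ereal_cases (h y) with hval | ⟨c, hval⟩ | hval
  · exact ⟨0, by rw [mem_epiS]; simp [hval]⟩
  · exact ⟨c, by rw [mem_epiS]; simp [hval]⟩
  · exact absurd hval hy

lemma union_epiS_nonempty (f : T → En n → EReal)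
    (hbi : ∀ z, conjF (conjF (fun w => ⨆ t, f t w)) z = ⨆ t, conjF (conjF (f t)) z)
    (hprop : ProperF (conjF (conjF (fun w => ⨆ t, f t w)))) :
    (⋃ t, epiS (conjF (f t))).Nonempty := by
  by_contra hne
  rw [Set.not_nonempty_iff_eq_empty] at hne
  have htop : ∀ t y, conjF (f t) y = ⊤ := by
    intro t y
    by_contra hy
    obtain ⟨r, hr⟩ := exists_mem_epiS hy
    have hmem : (y, r) ∈ ⋃ t, epiS (conjF (f t)) := Set.mem_iUnion.2 ⟨t, hr⟩
    rw [hne] at hmem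
    exact absurd hmem (notMem_empty _)
  have hbot : ∀ t z, conjF (conjF (f t)) z = ⊥ := by
    intro t z
    apply le_bot_iff.mp
    apply iSup_le
    intro y
    rw [htop t y, EReal.sub_top]
  have := hprop.2 0
  rw [hbi 0] at this
  have h2 : (⨆ t, conjF (conjF (f t)) 0) ≤ ⊥ := iSup_le fun t => (hbot t 0).le
  exact absurd (lt_of_lt_of_le this h2) (lt_irrefl _)

/-- A nonvertical separating functional that dominates all `epi (f t)*` but is beaten
at a point of `epi f*` yields a contradiction. -/
lemma funnel (f : T → En n → EReal)
    (hbi : ∀ z, conjF (conjF (fun w => ⨆ t, f t w)) z = ⨆ t, conjF (conjF (f t)) z)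
    {x : En n} {α : ℝ} {p : En n × ℝ}
    (hp : p ∈ epiS (conjF (fun w => ⨆ t, f t w)))
    (hsep : ∀ t, ∀ q ∈ epiS (conjF (f t)), ⟪x, q.1⟫ - q.2 ≤ α)
    (hgt : α < ⟪x, p.1⟫ - p.2) : False := by
  have ht : ∀ t, conjF (conjF (f t)) x ≤ (α : EReal) := by
    intro t
    apply iSup_le
    intro y
    rcases ereal_cases (conjF (f t) y) with hval | ⟨c, hval⟩ | hval
    · exfalso
      have hmem : (y, ⟪x, y⟫ - α - 1) ∈ epiS (conjF (f t)) := by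
        rw [mem_epiS]; simp [hval]
      have := hsep t _ hmem
      simp only at this
      linarith
    · have hmem : (y, c) ∈ epiS (conjF (f t)) := by
        rw [mem_epiS]; simp [hval]
      have hc := hsep t _ hmem
      simp only at hc
      rw [hval, ← EReal.coe_sub, EReal.coe_le_coe_iff]
      linarith
    · rw [hval, EReal.sub_top]; exact bot_le
  have hle : conjF (conjF (fun w => ⨆ t, f t w)) x ≤ (α : EReal) := by
    rw [hbi x]; exact iSup_le ht
  have hge : ((⟪x, p.1⟫ - p.2 : ℝ) : EReal) ≤ conjF (conjF (fun w => ⨆ t, f t w)) x := by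
    calc ((⟪x, p.1⟫ - p.2 : ℝ) : EReal) = (⟪x, p.1⟫ : EReal) - (p.2 : ℝ) := by
          rw [EReal.coe_sub]
      _ ≤ (⟪x, p.1⟫ : EReal) - conjF (fun w => ⨆ t, f t w) p.1 := EReal.sub_le_sub le_rfl hp
      _ ≤ conjF (conjF (fun w => ⨆ t, f t w)) x := le_conjF _ x p.1
  have := hge.trans hle
  rw [EReal.coe_le_coe_iff] at this
  linarith

/-- Normalized version with a positive vertical coefficient. -/
lemma funnel' (f : T → En n → EReal)
    (hbi : ∀ z, conjF (conjF (fun w => ⨆ t, f t w)) z = ⨆ t, conjF (conjF (f t)) z)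
    {xv : En n} {c u : ℝ} {p : En n × ℝ} (hc : 0 < c)
    (hp : p ∈ epiS (conjF (fun w => ⨆ t, f t w)))
    (hsep : ∀ t, ∀ q ∈ epiS (conjF (f t)), ⟪xv, q.1⟫ - c * q.2 ≤ u)
    (hgt : u < ⟪xv, p.1⟫ - c * p.2) : False := by
  apply funnel f hbi (x := c⁻¹ • xv) (α := u / c) hp
  · intro t q hq
    have h1 := hsep t q hq
    rw [real_inner_smul_left]
    rw [← sub_nonneg]
    have key : u / c - (c⁻¹ * ⟪xv, q.1⟫ - q.2) = c⁻¹ * (u - (⟪xv, q.1⟫ - c * q.2)) := by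
      field_simp
    rw [key]
    apply mul_nonneg (inv_nonneg.2 hc.le)
    linarith
  · rw [real_inner_smul_left, ← sub_pos]
    have key : c⁻¹ * ⟪xv, p.1⟫ - p.2 - u / c = c⁻¹ * ((⟪xv, p.1⟫ - c * p.2) - u) := by
      field_simp
    rw [key]
    apply mul_pos (inv_pos.2 hc)
    linarith

lemma upward_closure {S : Set (En n × ℝ)} (hS : ∀ q ∈ S, ∀ μ : ℝ, 0 ≤ μ → q + ((0 : En n), μ) ∈ S)
    {p : En n × ℝ} (hp : p ∈ closure (convexHull ℝ S)) {μ : ℝ} (hμ : 0 ≤ μ) :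
    p + ((0 : En n), μ) ∈ closure (convexHull ℝ S) := by
  set m := Homeomorph.addLeft (((0 : En n), μ) : En n × ℝ) with hm
  have h1 : p + ((0 : En n), μ) = m p := by simp [hm, add_comm]
  rw [h1]
  have h2 : m p ∈ m '' closure (convexHull ℝ S) := Set.mem_image_of_mem _ hp
  rw [Homeomorph.image_closure] at h2
  refine closure_mono ?_ h2
  have h3 : (m : En n × ℝ → En n × ℝ) '' convexHull ℝ S
      = convexHull ℝ ((m : En n × ℝ → En n × ℝ) '' S) := by
    have : (m : En n × ℝ → En n × ℝ)
        = (AffineEquiv.constVAdd ℝ (En n × ℝ) ((0 : En n), μ)).toAffineMap := by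
      ext q <;> simp [hm]
    rw [this, AffineMap.image_convexHull]
  rw [h3]
  apply convexHull_mono
  rintro q ⟨q', hq', rfl⟩
  simpa [hm, add_comm] using hS q' hq' μ hμ

/-- Decomposition of a continuous linear functional on `En n × ℝ`. -/
lemma functional_decomp (φ : (En n × ℝ) →L[ℝ] ℝ) :
    ∃ xψ : En n, ∀ p : En n × ℝ, φ p = ⟪xψ, p.1⟫ + p.2 * φ ((0 : En n), 1) := by
  refine ⟨(InnerProductSpace.toDual ℝ (En n)).symm
    (φ.comp (ContinuousLinearMap.inl ℝ (En n) ℝ)), fun p => ?_⟩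
  rw [InnerProductSpace.toDual_symm_apply]
  have h1 : p = (p.1, (0:ℝ)) + ((0 : En n), p.2) := by simp
  conv_lhs => rw [h1]
  rw [map_add]
  congr 1
  have h2 : ((0 : En n), p.2) = p.2 • (((0 : En n), (1:ℝ)) : En n × ℝ) := by
    simp [Prod.smul_mk]
  rw [h2, map_smul, smul_eq_mul]

end Separation

section Step1

variable {n : ℕ} {T : Type*}

lemma step1 (f : T → En n → EReal)
    (hbi : ∀ z, conjF (conjF (fun w => ⨆ t, f t w)) z = ⨆ t, conjF (conjF (f t)) z)
    (hprop : ProperF (conjF (conjF (fun w => ⨆ t, f t w)))) :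
    epiS (conjF (fun w => ⨆ t, f t w)) = closure (convexHull ℝ (⋃ t, epiS (conjF (f t)))) := by
  have hsub : (⋃ t, epiS (conjF (f t))) ⊆ epiS (conjF (fun w => ⨆ t, f t w)) := by
    rintro q hq
    rw [Set.mem_iUnion] at hq
    obtain ⟨t, hq⟩ := hq
    rw [mem_epiS]
    exact le_trans (conjF_anti (fun x => le_iSup (fun t => f t x) t) q.1) hq
  apply Set.Subset.antisymm
  · intro p hp
    by_contra hpc
    obtain ⟨φ, u, hφ, hu⟩ := geometric_hahn_banach_closed_point
      ((convex_convexHull ℝ _).closure) isClosed_closure hpc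
    obtain ⟨xψ, hdec⟩ := functional_decomp φ
    set s : ℝ := φ ((0 : En n), 1) with hsdef
    -- the union is nonempty
    obtain ⟨q₀, hq₀⟩ := union_epiS_nonempty f hbi hprop
    have hq₀C : q₀ ∈ closure (convexHull ℝ (⋃ t, epiS (conjF (f t)))) :=
      subset_closure (subset_convexHull ℝ _ hq₀)
    -- the union is upward closed
    have hSup : ∀ q ∈ ⋃ t, epiS (conjF (f t)), ∀ μ : ℝ, 0 ≤ μ →
        q + ((0 : En n), μ) ∈ ⋃ t, epiS (conjF (f t)) := by
      rintro q hq μ hμ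
      rw [Set.mem_iUnion] at hq ⊢
      obtain ⟨t, hq⟩ := hq
      refine ⟨t, ?_⟩
      rw [mem_epiS] at hq ⊢
      have h1 : (q + ((0 : En n), μ)).1 = q.1 := by simp
      have h2 : (q + ((0 : En n), μ)).2 = q.2 + μ := rfl
      rw [h1, h2]
      exact hq.trans (EReal.coe_le_coe_iff.2 (by linarith))
    have hvert : ∀ μ : ℝ, φ (q₀ + ((0 : En n), μ)) = φ q₀ + μ * s := by
      intro μ
      rw [map_add]
      congr 1
      have h2 : (((0 : En n), μ) : En n × ℝ) = μ • (((0 : En n), (1:ℝ)) : En n × ℝ) := by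
        simp [Prod.smul_mk]
      rw [h2, map_smul, smul_eq_mul, hsdef]
    have hs : s ≤ 0 := by
      by_contra hs'
      push_neg at hs'
      set μ : ℝ := max 0 ((u - φ q₀)/s + 1) with hμdef
      have hμ0 : (0:ℝ) ≤ μ := le_max_left _ _
      have hmem : q₀ + ((0 : En n), μ) ∈ closure (convexHull ℝ (⋃ t, epiS (conjF (f t)))) :=
        upward_closure hSup hq₀C hμ0
      have hlt := hφ _ hmem
      rw [hvert μ] at hlt
      have hμge : (u - φ q₀)/s + 1 ≤ μ := le_max_right _ _
      have : ((u - φ q₀)/s + 1) * s ≤ μ * s := mul_le_mul_of_nonneg_right hμge hs'.le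
      rw [add_mul, div_mul_cancel₀ _ hs'.ne', one_mul] at this
      linarith
    rcases lt_or_eq_of_le hs with hslt | hseq
    · -- nonvertical case
      apply funnel' f hbi (xv := xψ) (c := -s) (u := u) (neg_pos.2 hslt) hp
      · intro t q hq
        have hqC : q ∈ closure (convexHull ℝ (⋃ t, epiS (conjF (f t)))) :=
          subset_closure (subset_convexHull ℝ _ (Set.mem_iUnion.2 ⟨t, hq⟩))
        have h1 := hφ _ hqC
        rw [hdec q] at h1
        linarith
      · have h2 := hu
        rw [hdec p] at h2
        linarith
    · -- vertical case : s = 0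
      have hC0 : ∀ a ∈ closure (convexHull ℝ (⋃ t, epiS (conjF (f t)))), ⟪xψ, a.1⟫ < u := by
        intro a ha
        have := hφ _ ha
        rw [hdec a, hseq, mul_zero, add_zero] at this
        exact this
      obtain ⟨x₀, hx₀⟩ := hprop.1
      have hx₀b := hprop.2 x₀
      set β : ℝ := (conjF (conjF (fun w => ⨆ t, f t w)) x₀).toReal with hβdef
      have hβ : conjF (conjF (fun w => ⨆ t, f t w)) x₀ = (β : EReal) :=
        (EReal.coe_toReal hx₀.ne hx₀b.ne').symm
      have hmin : ∀ t y, ((⟪x₀, y⟫ - β : ℝ) : EReal) ≤ conjF (f t) y := by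
        intro t y
        apply ereal_sub_le_of_sub_le
        calc (⟪x₀, y⟫ : EReal) - conjF (f t) y ≤ conjF (conjF (f t)) x₀ := le_conjF _ _ _
          _ ≤ ⨆ t, conjF (conjF (f t)) x₀ := le_iSup (fun t => conjF (conjF (f t)) x₀) t
          _ = conjF (conjF (fun w => ⨆ t, f t w)) x₀ := (hbi x₀).symm
          _ = (β : EReal) := hβ
      have hH : ∀ a ∈ closure (convexHull ℝ (⋃ t, epiS (conjF (f t)))),
          ⟪x₀, a.1⟫ - a.2 ≤ β := by
        have hCH : closure (convexHull ℝ (⋃ t, epiS (conjF (f t))))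
            ⊆ {p : En n × ℝ | ⟪x₀, p.1⟫ - β ≤ p.2} := by
          apply closure_minimal
          apply convexHull_min _ (halfspace_convex x₀ β)
          · rintro q hq
            rw [Set.mem_iUnion] at hq
            obtain ⟨t, hq⟩ := hq
            rw [mem_epiS] at hq
            have h1 := (hmin t q.1).trans hq
            rw [EReal.coe_le_coe_iff] at h1
            exact h1
          · exact halfspace_isClosed x₀ β
        intro a ha
        have := hCH ha
        rw [Set.mem_setOf_eq] at this
        linarith
      have hδpos : 0 < ⟪xψ, p.1⟫ - u := by
        have h2 := hu
        rw [hdec p, hseq, mul_zero, add_zero] at h2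
        linarith
      set δ : ℝ := ⟪xψ, p.1⟫ - u with hδdef
      set D : ℝ := β - ⟪x₀, p.1⟫ + p.2 with hDdef
      set c : ℝ := δ / (2 * (|D| + 1)) with hcdef
      have hcpos : 0 < c := by
        apply div_pos hδpos
        positivity
      apply funnel' f hbi (xv := xψ + c • x₀) (c := c) (u := u + c * β) hcpos hp
      · intro t q hq
        have hqC : q ∈ closure (convexHull ℝ (⋃ t, epiS (conjF (f t)))) :=
          subset_closure (subset_convexHull ℝ _ (Set.mem_iUnion.2 ⟨t, hq⟩))
        have h1 := hC0 q hqC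
        have h2 := hH q hqC
        have h3 : c * (⟪x₀, q.1⟫ - q.2) ≤ c * β := mul_le_mul_of_nonneg_left h2 hcpos.le
        have h4 : c * (⟪x₀, q.1⟫ - q.2) = c * ⟪x₀, q.1⟫ - c * q.2 := by ring
        rw [inner_add_left, real_inner_smul_left]
        linarith
      · have h4 : c * D ≤ c * |D| := mul_le_mul_of_nonneg_left (le_abs_self D) hcpos.le
        have h5 : c * |D| ≤ δ / 2 := by
          rw [hcdef, div_mul_eq_mul_div, div_le_iff₀ (by positivity)]
          nlinarith [abs_nonneg D, hδpos]
        have h6 : c * D = c * β - c * ⟪x₀, p.1⟫ + c * p.2 := by rw [hDdef]; ring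
        rw [inner_add_left, real_inner_smul_left]
        linarith
  · exact closure_minimal (convexHull_min hsub (epiS_conjF_convex _)) (epiS_conjF_isClosed _)

end Step1

section Coercive

variable {n : ℕ}

lemma coord_abs_le_norm (u : En n) (j : Fin n) : |u j| ≤ ‖u‖ := by
  have h1 : ⟪EuclideanSpace.single j (1:ℝ), u⟫ = u j := by
    rw [EuclideanSpace.inner_single_left]; simp
  have h2 := abs_real_inner_le_norm (EuclideanSpace.single j (1:ℝ)) u
  rw [h1, EuclideanSpace.norm_single] at h2
  simpa using h2

lemma basis_expansion (u : En n) : ∑ j, u j • EuclideanSpace.single j (1:ℝ) = u := by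
  have h := (EuclideanSpace.basisFun (Fin n) ℝ).sum_repr u
  simpa [EuclideanSpace.basisFun_apply, EuclideanSpace.basisFun_repr] using h

private noncomputable def cvShift {n : ℕ} (r : ℝ) : Option (Fin n × Bool) → En n := fun i =>
  i.elim 0 (fun x => (if x.2 then r else -r) • EuclideanSpace.single x.1 (1:ℝ))

private lemma cvShift_none {n : ℕ} (r : ℝ) : cvShift (n := n) r none = 0 := rfl

private lemma cvShift_some {n : ℕ} (r : ℝ) (j : Fin n) (bb : Bool) :
    cvShift r (some (j, bb)) = (if bb then r else -r) • EuclideanSpace.single j (1:ℝ) := rfl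

private noncomputable def cvW {n : ℕ} (u : En n) (r : ℝ) (a b : Fin n → ℝ) : Option (Fin n × Bool) → ℝ :=
  fun i => i.elim (1 - (∑ j, |u j|) / r) (fun x => (if x.2 then a x.1 else b x.1) / r)

private lemma cvW_none {n : ℕ} (u : En n) (r : ℝ) (a b : Fin n → ℝ) :
    cvW u r a b none = 1 - (∑ j, |u j|) / r := rfl

private lemma cvW_some {n : ℕ} (u : En n) (r : ℝ) (a b : Fin n → ℝ) (j : Fin n) (bb : Bool) :
    cvW u r a b (some (j, bb)) = (if bb then a j else b j) / r := rfl

/-- If `conjF h` is proper and bounded on a neighborhood, `h` has a coercive affine minorant. -/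
lemma coercivity (h : En n → EReal) (hep : EpiPointed h) :
    ∃ (x₀ : En n) (ρ M : ℝ), 0 < ρ ∧
      ∀ p ∈ epiS h, ⟪x₀, p.1⟫ + ρ * ‖p.1‖ - M ≤ p.2 := by
  classical
  obtain ⟨hprop, x₀, hx₀⟩ := hep
  obtain ⟨ε, hε, hball⟩ := Metric.isOpen_iff.mp isOpen_interior x₀ hx₀
  have hballdm : Metric.ball x₀ ε ⊆ dm (conjF h) := hball.trans interior_subset
  set r : ℝ := ε / 2 with hrdef
  have hrpos : 0 < r := by positivity
  set shift : Option (Fin n × Bool) → En n := cvShift r with hshiftdef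
  set vertex : Option (Fin n × Bool) → En n := fun i => x₀ + shift i with hvertexdef
  have hshiftnorm : ∀ i, ‖shift i‖ < ε := by
    intro i
    match i with
    | none => simpa [hshiftdef, cvShift_none] using hε
    | some (j, b) =>
        have hb : ‖(if b then r else -r) • EuclideanSpace.single j (1:ℝ)‖ = r := by
          rw [norm_smul, EuclideanSpace.norm_single]
          rcases b with _ | _
          · simp [abs_of_neg (neg_neg_iff_pos.2 hrpos), abs_of_pos hrpos]
          · simp [abs_of_pos hrpos]
        rw [hshiftdef, cvShift_some, hb, hrdef]; linarith
  have hvmem : ∀ i, vertex i ∈ dm (conjF h) := by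
    intro i
    apply hballdm
    rw [Metric.mem_ball, dist_eq_norm]
    have h1 : vertex i - x₀ = shift i := by
      rw [hvertexdef]; exact add_sub_cancel_left x₀ (shift i)
    rw [h1]
    exact hshiftnorm i
  set M₀ : ℝ := Finset.univ.sup' ⟨none, Finset.mem_univ _⟩
    (fun i => (conjF h (vertex i)).toReal) with hM₀def
  have hMv : ∀ i, conjF h (vertex i) ≤ (M₀ : EReal) := by
    intro i
    have h1 : conjF h (vertex i) ≠ ⊤ := (hvmem i).ne
    have h2 : conjF h (vertex i) ≠ ⊥ := (hprop.2 _).ne'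
    rw [← EReal.coe_toReal h1 h2]
    exact EReal.coe_le_coe_iff.2
      (Finset.le_sup' (fun i => (conjF h (vertex i)).toReal) (Finset.mem_univ i))
  set ρ : ℝ := r / (n + 1) with hρdef
  have hρpos : 0 < ρ := by positivity
  have hbdd : ∀ u : En n, ‖u‖ ≤ ρ → conjF h (x₀ + u) ≤ (M₀ : EReal) := by
    intro u hu
    set a : Fin n → ℝ := fun j => max (u j) 0 with hadef
    set b : Fin n → ℝ := fun j => max (-u j) 0 with hbdef
    have hab : ∀ j, a j + b j = |u j| := by
      intro j
      rcases le_total (u j) 0 with hj | hj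
      · have ha1 : a j = 0 := max_eq_right hj
        have hb1 : b j = -u j := max_eq_left (neg_nonneg.2 hj)
        rw [ha1, hb1, abs_of_nonpos hj]; ring
      · have ha1 : a j = u j := max_eq_left hj
        have hb1 : b j = 0 := max_eq_right (neg_nonpos.2 hj)
        rw [ha1, hb1, abs_of_nonneg hj]; ring
    have hab2 : ∀ j, a j - b j = u j := by
      intro j
      rcases le_total (u j) 0 with hj | hj
      · have ha1 : a j = 0 := max_eq_right hj
        have hb1 : b j = -u j := max_eq_left (neg_nonneg.2 hj)
        rw [ha1, hb1]; ring
      · have ha1 : a j = u j := max_eq_left hj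
        have hb1 : b j = 0 := max_eq_right (neg_nonpos.2 hj)
        rw [ha1, hb1]; ring
    have hanneg : ∀ j, 0 ≤ a j := fun j => le_max_right _ _
    have hbnneg : ∀ j, 0 ≤ b j := fun j => le_max_right _ _
    have habs_sum : ∑ j, |u j| ≤ r * (n / (n+1)) := by
      calc ∑ j, |u j| ≤ ∑ _j : Fin n, ρ := by
            apply Finset.sum_le_sum
            intro j _
            exact (coord_abs_le_norm u j).trans hu
        _ = n * ρ := by simp [mul_comm]
        _ = r * (n / (n+1)) := by rw [hρdef]; field_simp
    set w : Option (Fin n × Bool) → ℝ := cvW u r a b with hwdef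
    have hwnone : w none = 1 - (∑ j, |u j|) / r := cvW_none u r a b
    have hwsome : ∀ j bb, w (some (j, bb)) = (if bb then a j else b j) / r :=
      fun j bb => cvW_some u r a b j bb
    have hfrac : (n:ℝ) / (n+1) ≤ 1 := by
      rw [div_le_one (by positivity)]; linarith
    have hwnneg : ∀ i, 0 ≤ w i := by
      intro i
      match i with
      | none =>
          rw [hwnone, sub_nonneg, div_le_one hrpos]
          calc ∑ j, |u j| ≤ r * (n / (n+1)) := habs_sum
            _ ≤ r * 1 := by nlinarith
            _ = r := mul_one r
      | some (j, bb) =>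
          rw [hwsome]
          rcases bb with _ | _
          · simpa using div_nonneg (hbnneg j) hrpos.le
          · simpa using div_nonneg (hanneg j) hrpos.le
    have hwsum : ∑ i, w i = 1 := by
      rw [Fintype.sum_option]
      have h2 : ∑ x : Fin n × Bool, w (some x) = (∑ j, |u j|) / r := by
        rw [Fintype.sum_prod_type]
        have h3 : ∀ j : Fin n, ∑ bb : Bool, w (some (j, bb)) = |u j| / r := by
          intro j
          rw [Fintype.sum_bool, hwsome, hwsome]
          simp only [if_true, Bool.false_eq_true, if_false]
          rw [← add_div, hab j]
        simp_rw [h3]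
        rw [← Finset.sum_div]
      rw [h2, hwnone]
      ring
    have hwpoint : ∑ i, w i • vertex i = x₀ + u := by
      have hsplit : ∀ i, w i • vertex i = w i • x₀ + w i • shift i := by
        intro i; rw [hvertexdef, smul_add]
      simp_rw [hsplit]
      rw [Finset.sum_add_distrib, ← Finset.sum_smul, hwsum, one_smul]
      congr 1
      rw [Fintype.sum_option]
      have h0 : w none • shift none = 0 := by rw [hshiftdef, cvShift_none]; simp
      rw [h0, zero_add, Fintype.sum_prod_type]
      have h3 : ∀ j : Fin n, ∑ bb : Bool, w (some (j, bb)) • shift (some (j, bb))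
          = u j • EuclideanSpace.single j (1:ℝ) := by
        intro j
        have hsh : ∀ bb : Bool, shift (some (j, bb))
            = (if bb then r else -r) • EuclideanSpace.single j (1:ℝ) := by
          intro bb; rw [hshiftdef, cvShift_some]
        rw [Fintype.sum_bool, hsh, hsh, hwsome, hwsome]
        simp only [if_true, Bool.false_eq_true, if_false]
        rw [smul_smul, smul_smul, ← add_smul]
        congr 1
        have e1 : a j / r * r = a j := div_mul_cancel₀ _ hrpos.ne'
        have e2 : b j / r * -r = -(b j) := by rw [mul_neg, div_mul_cancel₀ _ hrpos.ne']
        rw [e1, e2]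
        linarith [hab2 j]
      simp_rw [h3]
      exact basis_expansion u
    have hconv := epiS_conjF_convex h
    have hmem : ∀ i, (vertex i, M₀) ∈ epiS (conjF h) := fun i => hMv i
    have hcomb : (∑ i, w i • ((vertex i, M₀) : En n × ℝ)) ∈ epiS (conjF h) :=
      hconv.sum_mem (fun i _ => hwnneg i) hwsum (fun i _ => hmem i)
    have heq : (∑ i, w i • ((vertex i, M₀) : En n × ℝ)) = (x₀ + u, M₀) := by
      rw [Prod.ext_iff]
      constructor
      · rw [Prod.fst_sum]
        simpa using hwpoint
      · rw [Prod.snd_sum]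
        simp only [Prod.smul_snd, smul_eq_mul]
        rw [← Finset.sum_mul, hwsum, one_mul]
    rw [heq] at hcomb
    exact hcomb
  refine ⟨x₀, ρ, M₀, hρpos, ?_⟩
  intro p hp
  set u : En n := if hz : p.1 = 0 then 0 else (ρ / ‖p.1‖) • p.1 with hudef
  have hun : ‖u‖ ≤ ρ := by
    rw [hudef]
    split_ifs with hz
    · simp [hρpos.le]
    · rw [norm_smul, Real.norm_eq_abs, abs_of_pos (div_pos hρpos (norm_pos_iff.2 hz))]
      rw [div_mul_cancel₀ _ (norm_ne_zero_iff.2 hz)]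
  have hinner : ⟪u, p.1⟫ = ρ * ‖p.1‖ := by
    rw [hudef]
    split_ifs with hz
    · simp [hz]
    · have hn0 : ‖p.1‖ ≠ 0 := norm_ne_zero_iff.2 hz
      rw [real_inner_smul_left, real_inner_self_eq_norm_mul_norm]
      field_simp
  have hfy : ((⟪x₀ + u, p.1⟫ - M₀ : ℝ) : EReal) ≤ h p.1 := by
    apply ereal_sub_le_of_sub_le
    exact (le_conjF h (x₀ + u) p.1).trans (hbdd u hun)
  have hfin := hfy.trans hp
  rw [EReal.coe_le_coe_iff] at hfin
  rw [inner_add_left, hinner] at hfin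
  linarith

end Coercive

section Carath

open Classical in
private noncomputable def padF {α β γ : Sort*} (emb : α → β) (z : α → γ) (d : γ) (i : β) : γ :=
  if h : ∃ j, emb j = i then z h.choose else d

private lemma padF_emb {α β γ : Sort*} {emb : α → β} (hinj : Function.Injective emb)
    (z : α → γ) (d : γ) (j : α) : padF emb z d (emb j) = z j := by
  have hex : ∃ j', emb j' = emb j := ⟨j, rfl⟩
  rw [padF, dif_pos hex]
  exact congrArg z (hinj hex.choose_spec)

private lemma padF_not {α β γ : Sort*} {emb : α → β} {i : β} (hni : ¬ ∃ j, emb j = i)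
    (z : α → γ) (d : γ) : padF emb z d i = d := by
  rw [padF, dif_neg hni]

lemma carath {n : ℕ} {S : Set (En n × ℝ)} {s₀ : En n × ℝ} (hs₀ : s₀ ∈ S) {x : En n × ℝ}
    (hx : x ∈ convexHull ℝ S) :
    ∃ (w : Fin (n+2) → ℝ) (q : Fin (n+2) → En n × ℝ),
      (∀ i, 0 ≤ w i) ∧ ∑ i, w i = 1 ∧ (∀ i, q i ∈ S) ∧ ∑ i, w i • q i = x := by
  obtain ⟨ι, hfin, z, w, hrange, hai, hpos, hsum, hcomb⟩ :=
    eq_pos_convex_span_of_mem_convexHull hx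
  letI : Fintype ι := hfin
  have hfr : Module.finrank ℝ (En n × ℝ) = n + 1 := by
    rw [Module.finrank_prod, finrank_euclideanSpace_fin, Module.finrank_self]
  have hcard : Fintype.card ι ≤ n + 2 := by
    have h1 := hai.card_le_finrank_succ
    have h2 : Module.finrank ℝ (vectorSpan ℝ (Set.range z)) ≤ n + 1 := by
      rw [← hfr]
      exact Submodule.finrank_le _
    omega
  set e := Fintype.equivFin ι with hedef
  set emb : ι → Fin (n+2) := fun j => Fin.castLE hcard (e j) with hembdef
  have hinj : Function.Injective emb := fun a b hab => by
    apply e.injective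
    exact Fin.castLE_injective hcard hab
  set w' : Fin (n+2) → ℝ := padF emb w 0 with hw'def
  set q' : Fin (n+2) → En n × ℝ := padF emb z s₀ with hq'def
  have hsumtrans : ∀ (g : Fin (n+2) → ℝ → (En n × ℝ → (En n × ℝ))), True := fun _ => trivial
  have himage : ∀ i : Fin (n+2), i ∉ Finset.univ.image emb → ¬ ∃ j, emb j = i := by
    intro i hi hex
    obtain ⟨j, rfl⟩ := hex
    exact hi (Finset.mem_image_of_mem emb (Finset.mem_univ j))
  refine ⟨w', q', ?_, ?_, ?_, ?_⟩
  · intro i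
    by_cases h : ∃ j, emb j = i
    · obtain ⟨j, rfl⟩ := h
      rw [hw'def, padF_emb hinj]
      exact (hpos j).le
    · rw [hw'def, padF_not h]
  · have h1 : ∑ i, w' i = ∑ i ∈ Finset.univ.image emb, w' i := by
      symm
      apply Finset.sum_subset (Finset.subset_univ _)
      intro i _ hi
      rw [hw'def, padF_not (himage i hi)]
    rw [h1, Finset.sum_image (fun a _ b _ hab => hinj hab)]
    rw [← hsum]
    apply Finset.sum_congr rfl
    intro j _
    rw [hw'def, padF_emb hinj]
  · intro i
    by_cases h : ∃ j, emb j = i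
    · obtain ⟨j, rfl⟩ := h
      rw [hq'def, padF_emb hinj]
      exact hrange (Set.mem_range_self j)
    · rw [hq'def, padF_not h]
      exact hs₀
  · have h1 : ∑ i, w' i • q' i = ∑ i ∈ Finset.univ.image emb, w' i • q' i := by
      symm
      apply Finset.sum_subset (Finset.subset_univ _)
      intro i _ hi
      rw [hw'def, padF_not (himage i hi), zero_smul]
    rw [h1, Finset.sum_image (fun a _ b _ hab => hinj hab)]
    rw [← hcomb]
    apply Finset.sum_congr rfl
    intro j _
    rw [hw'def, hq'def, padF_emb hinj, padF_emb hinj]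

end Carath

/-- if `f** = sup_t f_t**` and `f*` is epi-pointed, then
`epi f* = conv (cl (⋃_t epi f_t*)) + (epi f*)_∞`. -/
theorem statement18 {n : ℕ} {T : Type*} (f : T → En n → EReal)
    (hbi : ∀ z, conjF (conjF (fun w => ⨆ t, f t w)) z = ⨆ t, conjF (conjF (f t)) z)
    (hep : EpiPointed (conjF (fun w => ⨆ t, f t w))) :
    epiS (conjF (fun w => ⨆ t, f t w)) =
      convexHull ℝ (closure (⋃ t, epiS (conjF (f t)))) +
        asympCone (epiS (conjF (fun w => ⨆ t, f t w))) := by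
  classical
  have hprop : ProperF (conjF (conjF (fun w => ⨆ t, f t w))) := hep.1
  set A : Set (En n × ℝ) := epiS (conjF (fun w => ⨆ t, f t w)) with hAdef
  set S₀ : Set (En n × ℝ) := ⋃ t, epiS (conjF (f t)) with hS₀def
  set S : Set (En n × ℝ) := closure S₀ with hSdef
  have hSclosed : IsClosed S := by rw [hSdef]; exact isClosed_closure
  have hAclosed : IsClosed A := epiS_conjF_isClosed _
  have hAconv : Convex ℝ A := epiS_conjF_convex _
  have hstep1 : A = closure (convexHull ℝ S₀) := step1 f hbi hprop
  have hS₀A : S₀ ⊆ A := by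
    rintro q hq
    rw [hS₀def, Set.mem_iUnion] at hq
    obtain ⟨t, hq⟩ := hq
    exact le_trans (conjF_anti (fun x => le_iSup (fun t => f t x) t) q.1) hq
  have hSA : S ⊆ A := by
    rw [hSdef, ← hAclosed.closure_eq]
    exact closure_mono hS₀A
  have hAeq : A = closure (convexHull ℝ S) := by
    apply Set.Subset.antisymm
    · rw [hstep1]
      exact closure_mono (convexHull_mono subset_closure)
    · exact closure_minimal (convexHull_min hSA hAconv) hAclosed
  obtain ⟨sbar, hsbar⟩ : S.Nonempty := (union_epiS_nonempty f hbi hprop).closure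
  obtain ⟨x₀, ρ, M', hρ, hcoer'⟩ := coercivity _ hep
  set M := max M' 0 with hMdef
  have hM : 0 ≤ M := le_max_right _ _
  have hcoer : ∀ p ∈ A, ⟪x₀, p.1⟫ + ρ * ‖p.1‖ - M ≤ p.2 := by
    intro p hp
    have h1 := hcoer' p hp
    have h2 : M' ≤ M := le_max_left _ _
    linarith
  set L : En n × ℝ → ℝ := fun p => p.2 - ⟪x₀, p.1⟫ with hLdef
  have hLcont : Continuous L := continuous_snd.sub (continuous_const.inner continuous_fst)
  have hLlow : ∀ p ∈ A, ρ * ‖p.1‖ - M ≤ L p := by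
    intro p hp
    have h1 := hcoer p hp
    rw [hLdef]
    simp only
    linarith
  have hLM : ∀ p ∈ A, -M ≤ L p := by
    intro p hp
    have h1 := hLlow p hp
    nlinarith [norm_nonneg p.1, hρ.le]
  have hkey : ∀ (B : ℝ) (w : ℝ) (q : En n × ℝ), 0 ≤ w → w ≤ 1 → q ∈ A → w * L q ≤ B →
      ‖w • q‖ ≤ (max B 0 + M)/ρ + (max B 0 + M) + ‖x₀‖ * ((max B 0 + M)/ρ) := by
    intro B w q hw0 hw1 hqA hwB
    have hB'0 : (0:ℝ) ≤ max B 0 := le_max_right _ _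
    have hBB' : B ≤ max B 0 := le_max_left _ _
    have h1 : ρ * ‖q.1‖ - M ≤ L q := hLlow q hqA
    have h2 : -M ≤ L q := hLM q hqA
    have hq1 : w * ‖q.1‖ ≤ (max B 0 + M)/ρ := by
      rw [le_div_iff₀ hρ]
      nlinarith [mul_le_mul_of_nonneg_left h1 hw0, mul_nonneg (sub_nonneg.2 hw1) hM]
    have hLq : w * |L q| ≤ max B 0 + M := by
      rcases le_or_gt 0 (L q) with hL | hL
      · rw [abs_of_nonneg hL]; linarith
      · rw [abs_of_neg hL]
        nlinarith [mul_le_mul_of_nonneg_right hw1 (neg_nonneg.2 hL.le)]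
    have habs : |q.2| ≤ |L q| + ‖x₀‖ * ‖q.1‖ := by
      have h3 : q.2 = L q + ⟪x₀, q.1⟫ := by rw [hLdef]; ring
      rw [h3]
      calc |L q + ⟪x₀, q.1⟫| ≤ |L q| + |⟪x₀, q.1⟫| := abs_add_le _ _
        _ ≤ |L q| + ‖x₀‖ * ‖q.1‖ := by linarith [abs_real_inner_le_norm x₀ q.1]
    have h4 : w * |q.2| ≤ w * |L q| + ‖x₀‖ * (w * ‖q.1‖) := by
      nlinarith [mul_le_mul_of_nonneg_left habs hw0]
    have h5 : ‖x₀‖ * (w * ‖q.1‖) ≤ ‖x₀‖ * ((max B 0 + M)/ρ) :=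
      mul_le_mul_of_nonneg_left hq1 (norm_nonneg x₀)
    have hnorm : ‖w • q‖ = w * ‖q‖ := by
      rw [norm_smul, Real.norm_eq_abs, abs_of_nonneg hw0]
    have hqnorm : ‖q‖ ≤ ‖q.1‖ + |q.2| := by
      rw [Prod.norm_def, Real.norm_eq_abs]
      exact max_le (by linarith [abs_nonneg q.2]) (by linarith [norm_nonneg q.1])
    have h6 : w * ‖q‖ ≤ w * ‖q.1‖ + w * |q.2| := by
      nlinarith [mul_le_mul_of_nonneg_left hqnorm hw0]
    rw [hnorm]
    linarith
  apply Set.Subset.antisymm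
  · -- hard inclusion
    intro p hpA
    have hAne : A.Nonempty := ⟨p, hpA⟩
    have hpcl : p ∈ closure (convexHull ℝ S) := hAeq ▸ hpA
    obtain ⟨pk, hpkmem, hpklim⟩ := mem_closure_iff_seq_limit.mp hpcl
    choose w q hw0 hwsum hqS hcomb using fun k => carath hsbar (hpkmem k)
    have hwle1 : ∀ k i, w k i ≤ 1 := by
      intro k i
      have h1 := Finset.single_le_sum (f := w k) (fun j _ => hw0 k j) (Finset.mem_univ i)
      rw [hwsum k] at h1
      exact h1
    have hqA : ∀ k i, q k i ∈ A := fun k i => hSA (hqS k i)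
    have hLlim : Tendsto (fun k => L (pk k)) atTop (𝓝 (L p)) := (hLcont.tendsto p).comp hpklim
    obtain ⟨B, hB⟩ := hLlim.bddAbove_range
    have hBmem : ∀ k, L (pk k) ≤ B := fun k => hB (Set.mem_range_self k)
    have hLsum : ∀ (ww : Fin (n+2) → ℝ) (qq : Fin (n+2) → En n × ℝ),
        L (∑ i, ww i • qq i) = ∑ i, ww i * L (qq i) := by
      intro ww qq
      rw [hLdef]
      simp only
      rw [Prod.snd_sum, Prod.fst_sum, inner_sum, ← Finset.sum_sub_distrib]
      apply Finset.sum_congr rfl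
      intro i _
      rw [Prod.smul_fst, Prod.smul_snd, real_inner_smul_right, smul_eq_mul]
      ring
    have hterm_low : ∀ k i, -M ≤ w k i * L (q k i) := by
      intro k i
      have h1 := hLM _ (hqA k i)
      nlinarith [mul_le_mul_of_nonneg_left h1 (hw0 k i),
        mul_le_mul_of_nonneg_right (hwle1 k i) hM]
    have hterm_up : ∀ k i, w k i * L (q k i) ≤ B + ((n:ℝ) + 2) * M := by
      intro k i
      have hsplit : ∑ j ∈ Finset.univ.erase i, w k j * L (q k j) + w k i * L (q k i)
          = ∑ j, w k j * L (q k j) := Finset.sum_erase_add _ _ (Finset.mem_univ i)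
      have hLpk : ∑ j, w k j * L (q k j) = L (pk k) := by
        rw [← hLsum, hcomb k]
      have hcard : ((Finset.univ.erase i).card : ℝ) ≤ (n:ℝ) + 2 := by
        have h1 : (Finset.univ.erase i).card ≤ n + 2 := by
          calc (Finset.univ.erase i).card ≤ (Finset.univ : Finset (Fin (n+2))).card :=
                Finset.card_le_card (Finset.erase_subset _ _)
            _ = n + 2 := by simp
        exact_mod_cast h1
      have hrest : -(((n:ℝ) + 2) * M) ≤ ∑ j ∈ Finset.univ.erase i, w k j * L (q k j) := by
        calc -(((n:ℝ) + 2) * M) ≤ -((((Finset.univ.erase i).card : ℝ)) * M) := by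
              nlinarith
          _ = ∑ _j ∈ Finset.univ.erase i, (-M) := by
              rw [Finset.sum_const, nsmul_eq_mul]
              ring
          _ ≤ ∑ j ∈ Finset.univ.erase i, w k j * L (q k j) :=
              Finset.sum_le_sum fun j _ => hterm_low k j
      have hBk := hBmem k
      linarith [hsplit, hLpk]
    set B₂ : ℝ := B + ((n:ℝ) + 2) * M with hB₂def
    set R : ℝ := (max B₂ 0 + M)/ρ + (max B₂ 0 + M) + ‖x₀‖ * ((max B₂ 0 + M)/ρ) with hRdef
    set Φ : ℕ → (Fin (n+2) → ℝ × (En n × ℝ)) := fun k i => (w k i, w k i • q k i) with hΦdef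
    have hΦmem : ∀ k, Φ k ∈ Metric.closedBall (0 : Fin (n+2) → ℝ × (En n × ℝ)) (max R 1) := by
      intro k
      rw [Metric.mem_closedBall, dist_zero_right]
      rw [pi_norm_le_iff_of_nonneg (le_trans zero_le_one (le_max_right _ _))]
      intro i
      have hΦki : Φ k i = (w k i, w k i • q k i) := by rw [hΦdef]
      rw [hΦki, Prod.norm_def]
      apply max_le
      · rw [Real.norm_eq_abs, abs_of_nonneg (hw0 k i)]
        exact le_trans (hwle1 k i) (le_max_right _ _)
      · exact le_trans (hkey B₂ _ _ (hw0 k i) (hwle1 k i) (hqA k i) (hterm_up k i))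
          (le_max_left _ _)
    obtain ⟨Λ, _, θ, hθmono, hθlim⟩ :=
      tendsto_subseq_of_bounded Metric.isBounded_closedBall hΦmem
    have hΦi : ∀ i, Tendsto (fun k => Φ (θ k) i) atTop (𝓝 (Λ i)) :=
      fun i => (tendsto_pi_nhds.mp hθlim) i
    set wb : Fin (n+2) → ℝ := fun i => (Λ i).1 with hwbdef
    set v : Fin (n+2) → En n × ℝ := fun i => (Λ i).2 with hvdef
    have hwlim : ∀ i, Tendsto (fun k => w (θ k) i) atTop (𝓝 (wb i)) := fun i =>
      (continuous_fst.tendsto (Λ i)).comp (hΦi i)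
    have hvlim : ∀ i, Tendsto (fun k => w (θ k) i • q (θ k) i) atTop (𝓝 (v i)) := fun i =>
      (continuous_snd.tendsto (Λ i)).comp (hΦi i)
    have hwb0 : ∀ i, 0 ≤ wb i := fun i =>
      ge_of_tendsto (hwlim i) (Filter.Eventually.of_forall fun k => hw0 _ i)
    have hwbsum : ∑ i, wb i = 1 := by
      have h1 : Tendsto (fun k => ∑ i, w (θ k) i) atTop (𝓝 (∑ i, wb i)) :=
        tendsto_finset_sum _ (fun i _ => hwlim i)
      have h2 : (fun k => ∑ i, w (θ k) i) = fun _ => (1:ℝ) := funext fun k => hwsum (θ k)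
      rw [h2] at h1
      exact tendsto_nhds_unique h1 tendsto_const_nhds
    have hvsum : ∑ i, v i = p := by
      have h1 : Tendsto (fun k => ∑ i, w (θ k) i • q (θ k) i) atTop (𝓝 (∑ i, v i)) :=
        tendsto_finset_sum _ (fun i _ => hvlim i)
      have h2 : (fun k => ∑ i, w (θ k) i • q (θ k) i) = fun k => pk (θ k) :=
        funext fun k => hcomb (θ k)
      rw [h2] at h1
      exact tendsto_nhds_unique h1 (hpklim.comp hθmono.tendsto_atTop)
    set qb : Fin (n+2) → En n × ℝ := fun i => (wb i)⁻¹ • v i with hqbdef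
    have hall : ∀ i, (0 < wb i → qb i ∈ S ∧ v i = wb i • qb i) ∧
        (wb i = 0 → v i ∈ asympCone A) := by
      intro i
      constructor
      · intro hpos
        have hev : ∀ᶠ k in atTop, 0 < w (θ k) i := (hwlim i).eventually_const_lt hpos
        have hqlim : Tendsto (fun k => q (θ k) i) atTop (𝓝 (qb i)) := by
          have h1 : Tendsto (fun k => (w (θ k) i)⁻¹ • (w (θ k) i • q (θ k) i)) atTop
              (𝓝 ((wb i)⁻¹ • v i)) := ((hwlim i).inv₀ hpos.ne').smul (hvlim i)
          refine Filter.Tendsto.congr' ?_ h1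
          filter_upwards [hev] with k hk
          rw [inv_smul_smul₀ hk.ne']
        constructor
        · exact hSclosed.mem_of_tendsto hqlim (Filter.Eventually.of_forall fun k => hqS _ i)
        · rw [hqbdef]
          simp only
          rw [smul_inv_smul₀ hpos.ne']
      · intro hzero
        by_cases hfreq : ∃ᶠ k in atTop, w (θ k) i = 0
        · obtain ⟨ψ, hψmono, hψ⟩ := Filter.extraction_of_frequently_atTop hfreq
          have h1 : Tendsto (fun k => w (θ (ψ k)) i • q (θ (ψ k)) i) atTop (𝓝 (v i)) :=
            (hvlim i).comp hψmono.tendsto_atTop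
          have h2 : (fun k => w (θ (ψ k)) i • q (θ (ψ k)) i) = fun _ => (0 : En n × ℝ) :=
            funext fun k => by rw [hψ k, zero_smul]
          rw [h2] at h1
          have hv0 : v i = 0 := tendsto_nhds_unique h1 tendsto_const_nhds
          rw [hv0]
          exact zero_mem_asympCone hAne
        · rw [Filter.not_frequently] at hfreq
          have hev : ∀ᶠ k in atTop, 0 < w (θ k) i := by
            filter_upwards [hfreq] with k hk
            exact lt_of_le_of_ne (hw0 _ i) (Ne.symm hk)
          have hw0lim : Tendsto (fun k => w (θ k) i) atTop (𝓝 0) := by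
            rw [← hzero]; exact hwlim i
          exact asympCone_mem_of_tendsto
            (Filter.Eventually.of_forall fun k => hqA _ i) hev hw0lim (hvlim i)
    set I : Finset (Fin (n+2)) := Finset.univ.filter (fun i => 0 < wb i) with hIdef
    set J : Finset (Fin (n+2)) := Finset.univ.filter (fun i => ¬ 0 < wb i) with hJdef
    have hIJ : ∑ i ∈ I, wb i • qb i + ∑ i ∈ J, v i = p := by
      have h1 : ∑ i ∈ I, wb i • qb i = ∑ i ∈ I, v i := by
        apply Finset.sum_congr rfl
        intro i hi
        rw [hIdef, Finset.mem_filter] at hi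
        exact (((hall i).1 hi.2).2).symm
      rw [h1, hIdef, hJdef, Finset.sum_filter_add_sum_filter_not, hvsum]
    have hc : ∑ i ∈ I, wb i • qb i ∈ convexHull ℝ S := by
      apply (convex_convexHull ℝ S).sum_mem
      · intro i _
        exact hwb0 i
      · have h1 := Finset.sum_filter_add_sum_filter_not Finset.univ (fun i => 0 < wb i) wb
        have h2 : ∑ i ∈ Finset.univ.filter (fun i => ¬ 0 < wb i), wb i = 0 :=
          Finset.sum_eq_zero fun i hi => by
            rw [Finset.mem_filter] at hi
            exact le_antisymm (not_lt.mp hi.2) (hwb0 i)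
        rw [hwbsum, h2, add_zero] at h1
        rw [hIdef]
        exact h1
      · intro i hi
        rw [hIdef, Finset.mem_filter] at hi
        exact subset_convexHull ℝ S (((hall i).1 hi.2).1)
    have hd : ∑ i ∈ J, v i ∈ asympCone A := by
      apply sum_mem_asympCone hAconv hAne
      intro i hi
      rw [hJdef, Finset.mem_filter] at hi
      exact (hall i).2 (le_antisymm (not_lt.mp hi.2) (hwb0 i))
    rw [← hIJ]
    exact Set.add_mem_add hc hd
  · rintro x hx
    rw [Set.mem_add] at hx
    obtain ⟨c, hc, d, hd, rfl⟩ := hx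
    exact add_asympCone_mem hAclosed hAconv (convexHull_min hSA hAconv hc) hd
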